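/- Let x0 ∈ ℝ, y0 > 0, and let q ∈ ℍ be such that |(q − x0)² + y0²| = r² for some r ≥ 0. Then for every I ∈ 𝕊, setting q0 = x0 + I·y0, one has √(r² + y0²) − y0 ≤ |q − q0| ≤ √(r² + y0²) + y0. -/

import Mathlib

open Quaternion

private lemma le_of_sq_le_sq' (x y : ℝ) (hy : 0 ≤ y) (h : x^2 ≤ y^2) : x ≤ y := by
  nlinarith [sq_nonneg (x - y), sq_nonneg (x + y)]

private lemma key_real (a y0 yv w M R : ℝ) (hy0 : 0 < y0) (hyv : 0 ≤ yv) (hM : 0 ≤ M)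
    (hR : 0 ≤ R) (hw : w^2 ≤ yv^2)
    (hM2 : M^2 = a^2 + yv^2 + y0^2 - 2*y0*w)
    (hR2 : R^2 = (a^2 + yv^2 + y0^2)^2 - 4*yv^2*y0^2) :
    M^2 - 2*M*y0 ≤ R ∧ R ≤ M^2 + 2*M*y0 := by
  have hwle : w ≤ yv := le_of_sq_le_sq' w yv hyv hw
  have hwge : -yv ≤ w := by
    have := le_of_sq_le_sq' (-w) yv hyv (by nlinarith)
    linarith
  set s := Real.sqrt (a^2 + (yv - y0)^2) with hs_def
  set t := Real.sqrt (a^2 + (yv + y0)^2) with ht_def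
  have hs : 0 ≤ s := Real.sqrt_nonneg _
  have ht : 0 ≤ t := Real.sqrt_nonneg _
  have hs2 : s^2 = a^2 + (yv - y0)^2 := Real.sq_sqrt (by positivity)
  have ht2 : t^2 = a^2 + (yv + y0)^2 := Real.sq_sqrt (by positivity)
  have h1 : R^2 = (s*t)^2 := by rw [hR2, mul_pow, hs2, ht2]; ring
  have hRst : R = s * t :=
    le_antisymm (le_of_sq_le_sq' R (s*t) (mul_nonneg hs ht) h1.le)
      (le_of_sq_le_sq' (s*t) R hR h1.ge)
  have hsM : s ≤ M := by
    apply le_of_sq_le_sq' _ _ hM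
    rw [hs2, hM2]
    nlinarith [mul_nonneg hy0.le (sub_nonneg.2 hwle)]
  have hMt : M ≤ t := by
    apply le_of_sq_le_sq' _ _ ht
    rw [ht2, hM2]
    nlinarith [mul_nonneg hy0.le (by linarith : (0:ℝ) ≤ yv + w)]
  have hyvs : yv - y0 ≤ s := by
    apply le_of_sq_le_sq' _ _ hs
    rw [hs2]
    nlinarith [sq_nonneg a]
  have hts : t ≤ s + 2*y0 := by
    apply le_of_sq_le_sq' _ _ (by linarith)
    rw [ht2]
    nlinarith [hs2, mul_nonneg hy0.le (by linarith : (0:ℝ) ≤ s + y0 - yv)]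
  constructor
  · rw [hRst]
    linarith [mul_nonneg (sub_nonneg.2 hsM) (sub_nonneg.2 hMt),
      mul_nonneg hM (by linarith : (0:ℝ) ≤ s + 2*y0 - t),
      mul_nonneg hs (sub_nonneg.2 hMt)]
  · rw [hRst]
    linarith [mul_nonneg ht (sub_nonneg.2 hsM),
      mul_nonneg hM (by linarith : (0:ℝ) ≤ M + 2*y0 - t)]

private lemma cs3 (b c d f g h : ℝ) :
    (b*f + c*g + d*h)^2 ≤ (b^2 + c^2 + d^2) * (f^2 + g^2 + h^2) := by
  nlinarith [sq_nonneg (b*g - c*f), sq_nonneg (b*h - d*f), sq_nonneg (c*h - d*g)]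

private lemma final_wrap (A M y0 : ℝ) (hy0 : 0 < y0) (hM : 0 ≤ M) (hA : 0 ≤ A)
    (k1 : M^2 - 2*M*y0 ≤ A) (k2 : A ≤ M^2 + 2*M*y0) :
    Real.sqrt (A + y0^2) - y0 ≤ M ∧ M ≤ Real.sqrt (A + y0^2) + y0 := by
  constructor
  · have h : Real.sqrt (A + y0^2) ≤ M + y0 := by
      rw [show M + y0 = Real.sqrt ((M + y0)^2) from (Real.sqrt_sq (by positivity)).symm]
      apply Real.sqrt_le_sqrt
      nlinarith
    linarith
  · have h : M - y0 ≤ Real.sqrt (A + y0^2) := by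
      rcases le_or_gt M y0 with hc | hc
      · have := Real.sqrt_nonneg (A + y0^2); linarith
      · rw [show M - y0 = Real.sqrt ((M - y0)^2) from (Real.sqrt_sq (by linarith)).symm]
        apply Real.sqrt_le_sqrt
        nlinarith
    linarith

theorem norm_sub_center_bounds (x0 y0 : ℝ) (hy0 : 0 < y0) (q : ℍ[ℝ]) (r : ℝ)
    (hr : 0 ≤ r) (hq : ‖(q - (x0 : ℍ[ℝ])) ^ 2 + ((y0 ^ 2 : ℝ) : ℍ[ℝ])‖ = r ^ 2)
    (I : ℍ[ℝ]) (hI : I ^ 2 = -1) (q0 : ℍ[ℝ]) (hq0 : q0 = (x0 : ℍ[ℝ]) + y0 • I) :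
    Real.sqrt (r ^ 2 + y0 ^ 2) - y0 ≤ ‖q - q0‖ ∧
      ‖q - q0‖ ≤ Real.sqrt (r ^ 2 + y0 ^ 2) + y0 := by
  -- components of I
  have h1 : I.re * I.re - I.imI * I.imI - I.imJ * I.imJ - I.imK * I.imK = -1 := by
    have := congrArg QuaternionAlgebra.re hI
    simpa [pow_two, Quaternion.re_mul] using this
  have p1 : I.re * I.imI = 0 := by
    have := congrArg QuaternionAlgebra.imI hI
    simp [pow_two, Quaternion.imI_mul] at this
    linarith
  have p2 : I.re * I.imJ = 0 := by
    have := congrArg QuaternionAlgebra.imJ hI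
    simp [pow_two, Quaternion.imJ_mul] at this
    linarith
  have p3 : I.re * I.imK = 0 := by
    have := congrArg QuaternionAlgebra.imK hI
    simp [pow_two, Quaternion.imK_mul] at this
    linarith
  have h5 : I.re^2 * (I.re^2 + 1) = 0 := by
    linear_combination I.re^2 * h1 + (I.re*I.imI) * p1 + (I.re*I.imJ) * p2 + (I.re*I.imK) * p3
  have he : I.re = 0 := by
    rcases mul_eq_zero.mp h5 with h | h
    · exact (pow_eq_zero_iff two_ne_zero).mp h
    · nlinarith [sq_nonneg I.re]
  have hunit : I.imI^2 + I.imJ^2 + I.imK^2 = 1 := by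
    rw [he] at h1; nlinarith [h1]
  -- abbreviations
  obtain ⟨yv, hyv_nonneg, hyv2⟩ : ∃ yv : ℝ, 0 ≤ yv ∧ yv^2 = q.imI^2 + q.imJ^2 + q.imK^2 :=
    ⟨Real.sqrt (q.imI^2 + q.imJ^2 + q.imK^2), Real.sqrt_nonneg _, Real.sq_sqrt (by positivity)⟩
  -- norm of defining expression
  have key2 : (r^2)^2 = ((q.re - x0)^2 - (q.imI^2 + q.imJ^2 + q.imK^2) + y0^2)^2
      + (2*(q.re - x0)*q.imI)^2 + (2*(q.re - x0)*q.imJ)^2 + (2*(q.re - x0)*q.imK)^2 := by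
    rw [← hq, pow_two (‖_‖), ← Quaternion.normSq_eq_norm_mul_self, Quaternion.normSq_def']
    simp only [pow_two, Quaternion.re_add, Quaternion.imI_add, Quaternion.imJ_add,
      Quaternion.imK_add, Quaternion.re_mul, Quaternion.imI_mul, Quaternion.imJ_mul,
      Quaternion.imK_mul, Quaternion.re_sub, Quaternion.imI_sub, Quaternion.imJ_sub,
      Quaternion.imK_sub, Quaternion.re_coe, Quaternion.imI_coe, Quaternion.imJ_coe,
      Quaternion.imK_coe]
    ring
  have hR2 : (r^2)^2 = ((q.re - x0)^2 + yv^2 + y0^2)^2 - 4*yv^2*y0^2 := by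
    rw [hyv2, key2]; ring
  -- norm of q - q0
  have hM2c : ‖q - q0‖^2 = (q.re - x0)^2 + (q.imI - y0*I.imI)^2 + (q.imJ - y0*I.imJ)^2
      + (q.imK - y0*I.imK)^2 := by
    rw [pow_two (‖_‖), ← Quaternion.normSq_eq_norm_mul_self, Quaternion.normSq_def', hq0]
    simp only [Quaternion.re_sub, Quaternion.imI_sub, Quaternion.imJ_sub, Quaternion.imK_sub,
      Quaternion.re_add, Quaternion.imI_add, Quaternion.imJ_add, Quaternion.imK_add,
      Quaternion.re_coe, Quaternion.imI_coe, Quaternion.imJ_coe, Quaternion.imK_coe,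
      Quaternion.re_smul, Quaternion.imI_smul, Quaternion.imJ_smul, Quaternion.imK_smul, he,
      smul_eq_mul]
    ring
  have hM2 : ‖q - q0‖^2 = (q.re - x0)^2 + yv^2 + y0^2
      - 2*y0*(q.imI * I.imI + q.imJ * I.imJ + q.imK * I.imK) := by
    rw [hM2c]; linear_combination y0^2 * hunit - hyv2
  have hw : (q.imI * I.imI + q.imJ * I.imJ + q.imK * I.imK)^2 ≤ yv^2 := by
    have hcs := cs3 q.imI q.imJ q.imK I.imI I.imJ I.imK
    rw [hunit, mul_one] at hcs
    rw [hyv2]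
    exact hcs
  obtain ⟨k1, k2⟩ := key_real (q.re - x0) y0 yv
    (q.imI * I.imI + q.imJ * I.imJ + q.imK * I.imK) ‖q - q0‖ (r^2) hy0
    hyv_nonneg (norm_nonneg _) (sq_nonneg r) hw hM2 hR2
  have goal := final_wrap (r^2) ‖q - q0‖ y0 hy0 (norm_nonneg _) (sq_nonneg r) k1 k2
  exact goal
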